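/- Let m ≥ 1, let B : Matrix (Fin m) (Fin m) (ZMod 2) be symmetric, and let Q : (Fin m → ZMod 2) → ZMod 4 be the associated Z_4-valued quadratic form Q(x) = ∑ j, ((B j j * x j).val : ZMod 4) + 2 * ∑_{j<k} ((B j k * x j * x k).val : ZMod 4). Then for every c : Fin m → ZMod 2, every ε : ZMod 4, and every u : Fin m → ZMod 2, the function f(x) = Q(x) + 2 * ((∑ j, c j * x j).val : ZMod 4) + ε satisfies Complex.normSq (f̂(u)) ≤ 2^(2m − B.rank). That is, the PAPR of the entire coset Q + ZRM(1,m) is at most 2^{m − rk(Q)}. -/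

import Mathlib

/-- The Fourier transform of a `ZMod 4`-valued generalized Boolean function. -/
noncomputable def fourier4 {m : ℕ} (f : (Fin m → ZMod 2) → ZMod 4) (u : Fin m → ZMod 2) : ℂ :=
  ∑ x : Fin m → ZMod 2, Complex.I ^ (f x).val * (-1 : ℂ) ^ (∑ j, u j * x j).val

/-- The `ZMod 4`-valued quadratic form `Q(x) = x B xᵀ = ∑_j b_{jj} x_j + 2 ∑_{j<k} b_{jk} x_j x_k`
associated with a symmetric binary matrix `B`. -/
def quadForm {m : ℕ} (B : Matrix (Fin m) (Fin m) (ZMod 2)) (x : Fin m → ZMod 2) : ZMod 4 :=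
  ∑ j, ((B j j * x j).val : ZMod 4) +
    2 * ∑ p ∈ Finset.univ.filter (fun p : Fin m × Fin m => p.1 < p.2),
      ((B p.1 p.2 * x p.1 * x p.2).val : ZMod 4)

namespace PAPRAux

noncomputable def χ (a : ZMod 4) : ℂ := Complex.I ^ a.val
noncomputable def ψ (a : ZMod 2) : ℂ := (-1 : ℂ) ^ a.val
def ν (a : ZMod 2) : ZMod 4 := (a.val : ZMod 4)

lemma I_pow_mod (n : ℕ) : Complex.I ^ (n % 4) = Complex.I ^ n := by
  conv_rhs => rw [← Nat.div_add_mod n 4]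
  rw [pow_add, pow_mul, Complex.I_pow_four, one_pow, one_mul]

lemma chi_add (a b : ZMod 4) : χ (a + b) = χ a * χ b := by
  unfold χ; rw [← pow_add, ZMod.val_add, I_pow_mod]

lemma neg_one_pow_mod (n : ℕ) : (-1 : ℂ) ^ (n % 2) = (-1 : ℂ) ^ n := by
  conv_rhs => rw [← Nat.div_add_mod n 2]
  rw [pow_add, pow_mul, neg_one_sq, one_pow, one_mul]

lemma psi_add (a b : ZMod 2) : ψ (a + b) = ψ a * ψ b := by
  unfold ψ; rw [← pow_add, ZMod.val_add, neg_one_pow_mod]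

lemma chi_zero : χ 0 = 1 := by simp [χ]
lemma psi_zero : ψ 0 = 1 := by simp [ψ, show ((0 : ZMod 2)).val = 0 from rfl]
lemma psi_one : ψ 1 = -1 := by simp [ψ, show ((1 : ZMod 2)).val = 1 from rfl]

lemma abs_chi (a : ZMod 4) : ‖χ a‖ = 1 := by simp [χ]
lemma abs_psi (a : ZMod 2) : ‖ψ a‖ = 1 := by simp [ψ]

lemma conj_chi (a : ZMod 4) : (starRingEnd ℂ) (χ a) = χ (-a) := by
  fin_cases a
  · show (starRingEnd ℂ) (χ 0) = χ (-0)
    norm_num [χ, show ((0 : ZMod 4)).val = 0 from rfl]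
  · show (starRingEnd ℂ) (χ 1) = χ (-1)
    norm_num [χ, show ((1 : ZMod 4)).val = 1 from rfl, show ((-1 : ZMod 4)).val = 3 from rfl,
      pow_succ, Complex.I_sq, Complex.conj_I]
  · show (starRingEnd ℂ) (χ 2) = χ (-2)
    norm_num [χ, show ((2 : ZMod 4)).val = 2 from rfl, show ((-2 : ZMod 4)).val = 2 from rfl,
      pow_succ, Complex.I_sq, Complex.conj_I]
  · show (starRingEnd ℂ) (χ 3) = χ (-3)
    norm_num [χ, show ((3 : ZMod 4)).val = 3 from rfl, show ((-3 : ZMod 4)).val = 1 from rfl,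
      pow_succ, Complex.I_sq, Complex.conj_I]

lemma conj_psi (a : ZMod 2) : (starRingEnd ℂ) (ψ a) = ψ a := by
  unfold ψ; rw [map_pow]; norm_num

lemma chi_two_nu (a : ZMod 2) : χ (2 * ν a) = ψ a := by
  fin_cases a
  · show χ (2 * ν 0) = ψ 0
    norm_num [χ, ψ, ν, show ((0 : ZMod 2)).val = 0 from rfl, show ((0 : ZMod 4)).val = 0 from rfl]
  · show χ (2 * ν 1) = ψ 1
    rw [ν, show ((1 : ZMod 2)).val = 1 from rfl]
    norm_num [χ, ψ, show ((2 : ZMod 4)).val = 2 from rfl, show ((1 : ZMod 2)).val = 1 from rfl,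
      pow_succ, Complex.I_sq]

lemma psi_sum {ι : Type*} (s : Finset ι) (f : ι → ZMod 2) :
    ψ (∑ j ∈ s, f j) = ∏ j ∈ s, ψ (f j) := by
  induction s using Finset.cons_induction with
  | empty => simp [psi_zero]
  | cons a s ha ih => rw [Finset.sum_cons, Finset.prod_cons, psi_add, ih]

lemma sum_psi {m : ℕ} (v : Fin m → ZMod 2) :
    ∑ x : Fin m → ZMod 2, ψ (∑ j, v j * x j) = if v = 0 then (2 : ℂ) ^ m else 0 := by
  have h1 : ∀ x : Fin m → ZMod 2, ψ (∑ j, v j * x j) = ∏ j, ψ (v j * x j) :=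
    fun x => psi_sum _ _
  simp only [h1]
  have h2 : ∑ x : Fin m → ZMod 2, ∏ j, ψ (v j * x j)
      = ∏ j, ∑ t : ZMod 2, ψ (v j * t) := by
    rw [Finset.prod_univ_sum]
    rw [← Fintype.piFinset_univ]
  rw [h2]
  rcases eq_or_ne v 0 with rfl | hv
  · simp [psi_zero]
  · rw [if_neg hv]
    obtain ⟨j, hj⟩ : ∃ j, v j ≠ 0 := by
      by_contra h; push_neg at h; exact hv (funext h)
    have hvj : v j = 1 := by
      have h : ∀ a : ZMod 2, a ≠ 0 → a = 1 := by decide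
      exact h _ hj
    apply Finset.prod_eq_zero (Finset.mem_univ j)
    have h3 : ∑ t : ZMod 2, ψ (v j * t) = ψ (v j * 0) + ψ (v j * 1) := by
      rw [show (Finset.univ : Finset (ZMod 2)) = {0, 1} from rfl]
      simp
    rw [h3, hvj]
    simp [psi_zero, psi_one]

lemma card_ker {m : ℕ} (B : Matrix (Fin m) (Fin m) (ZMod 2)) :
    Nat.card (LinearMap.ker B.mulVecLin) = 2 ^ (m - B.rank) := by
  have hrn := LinearMap.finrank_range_add_finrank_ker B.mulVecLin
  have hdim : Module.finrank (ZMod 2) ((Fin m → ZMod 2)) = m := by simp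
  have hrank : B.rank = Module.finrank (ZMod 2) (LinearMap.range B.mulVecLin) := rfl
  letI : Fintype (LinearMap.ker B.mulVecLin) := Fintype.ofFinite _
  have hcard : Nat.card (LinearMap.ker B.mulVecLin)
      = 2 ^ Module.finrank (ZMod 2) (LinearMap.ker B.mulVecLin) := by
    have := Module.card_eq_pow_finrank (K := ZMod 2) (V := LinearMap.ker B.mulVecLin)
    simpa [Nat.card_eq_fintype_card, ZMod.card] using this
  rw [hcard]
  congr 1
  omega

lemma rank_le_m {m : ℕ} (B : Matrix (Fin m) (Fin m) (ZMod 2)) : B.rank ≤ m := by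
  simpa using B.rank_le_card_width

lemma nu_add : ∀ a b : ZMod 2, ν (a + b) = ν a + ν b + 2 * ν (a * b) := by decide
lemma two_nu_add : ∀ a b : ZMod 2, 2 * ν (a + b) = 2 * ν a + 2 * ν b := by decide
lemma mul_mul_mul : ∀ b x z : ZMod 2, (b * x) * (b * z) = b * x * z := by decide
lemma neg_two_nu : ∀ a : ZMod 2, -(2 * ν a) = 2 * ν a := by decide
lemma add_add_self : ∀ a b : ZMod 2, a + (a + b) = b := by decide

lemma two_nu_sum {ι : Type*} (s : Finset ι) (f : ι → ZMod 2) :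
    2 * ν (∑ j ∈ s, f j) = ∑ j ∈ s, 2 * ν (f j) := by
  induction s using Finset.cons_induction with
  | empty => simp [ν]
  | cons a s ha ih => rw [Finset.sum_cons, Finset.sum_cons, two_nu_add, ih]

lemma quad_add {m : ℕ} (B : Matrix (Fin m) (Fin m) (ZMod 2)) (hB : B.transpose = B)
    (x z : Fin m → ZMod 2) :
    quadForm B (x + z) = quadForm B x + quadForm B z
      + 2 * ν (∑ j, B.mulVec z j * x j) := by
  have hBs : ∀ j k, B k j = B j k := fun j k => by
    have := congrFun (congrFun hB j) k; simpa [Matrix.transpose_apply] using this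
  set S := Finset.univ.filter (fun p : Fin m × Fin m => p.1 < p.2) with hS
  have hdiag : ∀ j ∈ Finset.univ, ν (B j j * (x + z) j) =
      ν (B j j * x j) + ν (B j j * z j) + 2 * ν (B j j * x j * z j) := by
    intro j _
    have h : B j j * (x + z) j = B j j * x j + B j j * z j := by
      simp [Pi.add_apply, mul_add]
    rw [h, nu_add, mul_mul_mul]
  have hoff : ∀ p ∈ S,
      2 * ν (B p.1 p.2 * (x + z) p.1 * (x + z) p.2) =
        2 * ν (B p.1 p.2 * x p.1 * x p.2) + 2 * ν (B p.1 p.2 * x p.1 * z p.2)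
        + 2 * ν (B p.1 p.2 * z p.1 * x p.2) + 2 * ν (B p.1 p.2 * z p.1 * z p.2) := by
    intro p _
    have h : B p.1 p.2 * (x + z) p.1 * (x + z) p.2
        = (B p.1 p.2 * x p.1 * x p.2 + B p.1 p.2 * x p.1 * z p.2)
          + (B p.1 p.2 * z p.1 * x p.2 + B p.1 p.2 * z p.1 * z p.2) := by
      simp only [Pi.add_apply]; ring
    rw [h, two_nu_add, two_nu_add, two_nu_add]; ring
  have hcross : 2 * ν (∑ j, B.mulVec z j * x j)
      = ∑ p : Fin m × Fin m, 2 * ν (B p.1 p.2 * z p.2 * x p.1) := by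
    have h1 : (∑ j, B.mulVec z j * x j) = ∑ p : Fin m × Fin m, B p.1 p.2 * z p.2 * x p.1 := by
      rw [← Finset.univ_product_univ, Finset.sum_product]
      refine Finset.sum_congr rfl fun j _ => ?_
      simp only [Matrix.mulVec, dotProduct]
      rw [Finset.sum_mul]
    rw [h1, two_nu_sum]
  have hsplit : ∑ p : Fin m × Fin m, 2 * ν (B p.1 p.2 * z p.2 * x p.1)
      = (∑ j, 2 * ν (B j j * x j * z j))
        + ((∑ p ∈ S, 2 * ν (B p.1 p.2 * x p.1 * z p.2))
          + (∑ p ∈ S, 2 * ν (B p.1 p.2 * z p.1 * x p.2))) := by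
    have h0 := Finset.sum_filter_add_sum_filter_not Finset.univ
      (fun p : Fin m × Fin m => p.1 < p.2) (fun p => 2 * ν (B p.1 p.2 * z p.2 * x p.1))
    have h1 := Finset.sum_filter_add_sum_filter_not
      (Finset.univ.filter (fun p : Fin m × Fin m => ¬ p.1 < p.2))
      (fun p : Fin m × Fin m => p.2 < p.1) (fun p => 2 * ν (B p.1 p.2 * z p.2 * x p.1))
    have ha : ∑ p ∈ S, 2 * ν (B p.1 p.2 * z p.2 * x p.1)
        = ∑ p ∈ S, 2 * ν (B p.1 p.2 * x p.1 * z p.2) := by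
      refine Finset.sum_congr rfl fun p _ => ?_; ring_nf
    have hb : ∑ p ∈ (Finset.univ.filter (fun p : Fin m × Fin m => ¬ p.1 < p.2)).filter
          (fun p => p.2 < p.1), 2 * ν (B p.1 p.2 * z p.2 * x p.1)
        = ∑ p ∈ S, 2 * ν (B p.1 p.2 * z p.1 * x p.2) := by
      refine Finset.sum_nbij' (fun p => p.swap) (fun p => p.swap) ?_ ?_ ?_ ?_ ?_
      · intro p hp
        simp only [Finset.mem_filter, Finset.mem_univ, true_and] at hp
        simp [hS, hp.2]
      · intro p hp
        simp only [hS, Finset.mem_filter, Finset.mem_univ, true_and] at hp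
        simp only [Finset.mem_filter, Finset.mem_univ, true_and, Prod.fst_swap,
          Prod.snd_swap]
        exact ⟨asymm hp, hp⟩
      · intro p _; simp
      · intro p _; simp
      · intro p hp
        simp only [Prod.fst_swap, Prod.snd_swap]
        rw [hBs p.2 p.1]
    have hc : ∑ p ∈ (Finset.univ.filter (fun p : Fin m × Fin m => ¬ p.1 < p.2)).filter
          (fun p => ¬ p.2 < p.1), 2 * ν (B p.1 p.2 * z p.2 * x p.1)
        = ∑ j, 2 * ν (B j j * x j * z j) := by
      refine Finset.sum_nbij' (fun p => p.1) (fun j => (j, j)) ?_ ?_ ?_ ?_ ?_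
      · intro p _; simp
      · intro j _; simp
      · intro p hp
        simp only [Finset.mem_filter, Finset.mem_univ, true_and, not_lt] at hp
        have heq : p.1 = p.2 := le_antisymm hp.2 hp.1
        exact Prod.ext rfl heq
      · intro j _; rfl
      · intro p hp
        simp only [Finset.mem_filter, Finset.mem_univ, true_and, not_lt] at hp
        have h2 : p.2 = p.1 := le_antisymm hp.1 hp.2
        rw [h2]; ring_nf
    rw [← h0, ← h1, ha, hb, hc]
    ring
  have hnu : ∀ a : ZMod 2, ((a.val : ZMod 4)) = ν a := fun _ => rfl
  unfold quadForm
  simp only [hnu]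
  rw [Finset.sum_congr rfl hdiag, Finset.mul_sum, Finset.sum_congr rfl hoff, hcross, hsplit]
  simp only [Finset.sum_add_distrib, Finset.mul_sum]
  ring

end PAPRAux

open PAPRAux in
/-- The PAPR of the whole coset `Q + ZRM(1,m)` of a `ZMod 4`-valued quadratic form `Q` of
rank `r` is at most `2^{m-r}`: every word `f(x) = Q(x) + 2(c·x) + ε` of the coset satisfies
`|f̂(u)|² ≤ 2^{2m - r}` for all `u`. -/
theorem stmt14 (m : ℕ) (hm : 1 ≤ m) (B : Matrix (Fin m) (Fin m) (ZMod 2))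
    (hB : B.transpose = B) :
    ∀ (c : Fin m → ZMod 2) (ε : ZMod 4) (u : Fin m → ZMod 2),
      Complex.normSq
          (fourier4 (fun x => quadForm B x + 2 * ((∑ j, c j * x j).val : ZMod 4) + ε) u)
        ≤ 2 ^ (2 * m - B.rank) := by
  intro c ε u
  set F : (Fin m → ZMod 2) → ZMod 4 :=
    fun x => quadForm B x + 2 * ((∑ j, c j * x j).val : ZMod 4) + ε with hF
  set S : ℂ := fourier4 F u with hSdef
  -- difference identity
  have f_diff : ∀ x z : Fin m → ZMod 2,
      F (x + z) = F x + (quadForm B z + 2 * ν (∑ j, c j * z j))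
        + 2 * ν (∑ j, B.mulVec z j * x j) := by
    intro x z
    have hc : (∑ j, c j * (x + z) j) = (∑ j, c j * x j) + (∑ j, c j * z j) := by
      rw [← Finset.sum_add_distrib]
      exact Finset.sum_congr rfl fun j _ => by simp [mul_add]
    show quadForm B (x + z) + 2 * ν (∑ j, c j * (x + z) j) + ε = _
    rw [quad_add B hB x z, hc, two_nu_add]
    show _ = quadForm B x + 2 * ν (∑ j, c j * x j) + ε + _ + _
    ring
  -- expand normSq as a double sum
  have habs : (Complex.normSq S : ℂ) = S * (starRingEnd ℂ) S := (Complex.mul_conj S).symm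
  have hterm : ∀ x : Fin m → ZMod 2,
      Complex.I ^ (F x).val * (-1 : ℂ) ^ (∑ j, u j * x j).val
        = χ (F x) * ψ (∑ j, u j * x j) := fun _ => rfl
  have hSsum : S = ∑ x : Fin m → ZMod 2, χ (F x) * ψ (∑ j, u j * x j) := by
    rw [hSdef]; unfold fourier4; exact Finset.sum_congr rfl fun x _ => hterm x
  have hconj : (starRingEnd ℂ) S
      = ∑ y : Fin m → ZMod 2, χ (-(F y)) * ψ (∑ j, u j * y j) := by
    rw [hSsum, map_sum]
    exact Finset.sum_congr rfl fun y _ => by rw [map_mul, conj_chi, conj_psi]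
  -- the double sum, reindexed
  have hdouble : (Complex.normSq S : ℂ)
      = ∑ z : Fin m → ZMod 2, ((χ (-(quadForm B z + 2 * ν (∑ j, c j * z j)))
          * ψ (∑ j, u j * z j))
          * ∑ x : Fin m → ZMod 2, ψ (∑ j, B.mulVec z j * x j)) := by
    rw [habs, hconj, hSsum, Finset.sum_mul_sum]
    have hinner : ∀ x : Fin m → ZMod 2,
        (∑ y : Fin m → ZMod 2, χ (F x) * ψ (∑ j, u j * x j)
            * (χ (-(F y)) * ψ (∑ j, u j * y j)))
        = ∑ z : Fin m → ZMod 2, (χ (-(quadForm B z + 2 * ν (∑ j, c j * z j)))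
            * ψ (∑ j, u j * z j)) * ψ (∑ j, B.mulVec z j * x j) := by
      intro x
      refine (Fintype.sum_equiv (Equiv.addLeft x) _ _ ?_).symm
      intro z
      -- goal: RHS term at z = LHS term at (x + z)
      show (χ (-(quadForm B z + 2 * ν (∑ j, c j * z j))) * ψ (∑ j, u j * z j))
          * ψ (∑ j, B.mulVec z j * x j)
        = χ (F x) * ψ (∑ j, u j * x j) * (χ (-(F (x + z))) * ψ (∑ j, u j * (x + z) j))
      have hchi : χ (F x) * χ (-(F (x + z)))
          = χ (-(quadForm B z + 2 * ν (∑ j, c j * z j)))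
            * ψ (∑ j, B.mulVec z j * x j) := by
        rw [← chi_add]
        have harg : F x + -(F (x + z))
            = -(quadForm B z + 2 * ν (∑ j, c j * z j))
              + 2 * ν (∑ j, B.mulVec z j * x j) := by
          have ht := neg_two_nu (∑ j, B.mulVec z j * x j)
          rw [f_diff x z]
          linear_combination ht
        rw [harg, chi_add, chi_two_nu]
      have hpsi : ψ (∑ j, u j * x j) * ψ (∑ j, u j * (x + z) j)
          = ψ (∑ j, u j * z j) := by
        rw [← psi_add]
        congr 1
        have hu : (∑ j, u j * (x + z) j) = (∑ j, u j * x j) + (∑ j, u j * z j) := by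
          rw [← Finset.sum_add_distrib]
          exact Finset.sum_congr rfl fun j _ => by simp [mul_add]
        rw [hu, add_add_self]
      calc (χ (-(quadForm B z + 2 * ν (∑ j, c j * z j))) * ψ (∑ j, u j * z j))
            * ψ (∑ j, B.mulVec z j * x j)
          = (χ (-(quadForm B z + 2 * ν (∑ j, c j * z j)))
              * ψ (∑ j, B.mulVec z j * x j)) * ψ (∑ j, u j * z j) := by ring
        _ = (χ (F x) * χ (-(F (x + z)))) * (ψ (∑ j, u j * x j) * ψ (∑ j, u j * (x + z) j)) := by
            rw [hchi, hpsi]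
        _ = _ := by ring
    rw [Finset.sum_congr rfl fun x _ => hinner x, Finset.sum_comm]
    exact Finset.sum_congr rfl fun z _ => by rw [Finset.mul_sum]
  -- evaluate the inner sum
  have hker : ∀ z : Fin m → ZMod 2,
      (∑ x : Fin m → ZMod 2, ψ (∑ j, B.mulVec z j * x j))
        = if B.mulVec z = 0 then (2 : ℂ) ^ m else 0 := fun z => sum_psi _
  have hT : (Complex.normSq S : ℂ)
      = ∑ z : Fin m → ZMod 2, ((χ (-(quadForm B z + 2 * ν (∑ j, c j * z j)))
          * ψ (∑ j, u j * z j)) * if B.mulVec z = 0 then (2 : ℂ) ^ m else 0) := by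
    rw [hdouble]
    exact Finset.sum_congr rfl fun z _ => by rw [hker z]
  -- bound
  have habsT : Complex.normSq S
      ≤ ∑ z : Fin m → ZMod 2, (if B.mulVec z = 0 then (2 : ℝ) ^ m else 0) := by
    have h1 : Complex.normSq S = ‖((Complex.normSq S : ℂ))‖ := by
      rw [Complex.norm_real, Real.norm_of_nonneg (Complex.normSq_nonneg S)]
    rw [h1, hT]
    refine le_trans (norm_sum_le _ _) ?_
    refine Finset.sum_le_sum fun z _ => ?_
    rw [norm_mul, norm_mul, abs_chi, abs_psi, one_mul, one_mul]
    rcases eq_or_ne (B.mulVec z) 0 with h | h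
    · rw [if_pos h, if_pos h]
      rw [norm_pow]
      simp
    · rw [if_neg h, if_neg h]
      simp
  have hcount : ∑ z : Fin m → ZMod 2, (if B.mulVec z = 0 then (2 : ℝ) ^ m else 0)
      = (Finset.univ.filter (fun z : Fin m → ZMod 2 => B.mulVec z = 0)).card * 2 ^ m := by
    rw [Finset.sum_ite, Finset.sum_const, Finset.sum_const_zero, add_zero, nsmul_eq_mul]
  have hcard : (Finset.univ.filter (fun z : Fin m → ZMod 2 => B.mulVec z = 0)).card
      = 2 ^ (m - B.rank) := by
    letI : Fintype (LinearMap.ker B.mulVecLin) := Fintype.ofFinite _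
    rw [← card_ker B, Nat.card_eq_fintype_card]
    rw [← Fintype.card_subtype]
    apply Fintype.card_congr
    apply Equiv.subtypeEquivRight
    intro z
    simp [LinearMap.mem_ker, Matrix.mulVecLin_apply]
  have hle : Complex.normSq S ≤ (2 : ℝ) ^ (m - B.rank) * 2 ^ m := by
    calc Complex.normSq S ≤ _ := habsT
      _ = _ := hcount
      _ = (2 : ℝ) ^ (m - B.rank) * 2 ^ m := by rw [hcard]; push_cast; ring
  have hexp : (2 : ℝ) ^ (m - B.rank) * 2 ^ m = 2 ^ (2 * m - B.rank) := by
    rw [← pow_add]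
    congr 1
    have := rank_le_m B
    omega
  calc Complex.normSq S ≤ _ := hle
    _ = _ := hexp
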